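/- Let a,b,c,r ∈ F₃^* and suppose (u₁,v₁,…,u₆,v₆) = (a,r,b,r,c,r,−a,r,−b,r,−c,r). Let x_k = u₁+⋯+u_{k−1}. Then Δ₄ := x₂²v₁ + x₃²v₂ + x₄²v₃ + x₅²v₄ + x₆²v₅ = r(ab + bc − ac), and Δ₄ = 0 holds in F₃ if and only if a = c = −b. -/
import Mathlib


/-- For the tuple `(a,r,b,r,c,r,-a,r,-b,r,-c,r)` over `F₃^*`, the obstruction
`Δ₄ = x₂²v₁ + x₃²v₂ + x₄²v₃ + x₅²v₄ + x₆²v₅` equals `r(ab + bc - ac)`, and it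
vanishes in `F₃` if and only if `a = c = -b`. -/
theorem delta4_value (a b c r : ZMod 3)
    (ha : a ≠ 0) (hb : b ≠ 0) (hc : c ≠ 0) (hr : r ≠ 0)
    (u v x : ℕ → ZMod 3)
    (hx : ∀ k, x k = ∑ m ∈ Finset.Icc 1 (k - 1), u m)
    (h : u 1 = a ∧ v 1 = r ∧ u 2 = b ∧ v 2 = r ∧ u 3 = c ∧ v 3 = r ∧
      u 4 = -a ∧ v 4 = r ∧ u 5 = -b ∧ v 5 = r ∧ u 6 = -c ∧ v 6 = r) :
    (x 2 ^ 2 * v 1 + x 3 ^ 2 * v 2 + x 4 ^ 2 * v 3 + x 5 ^ 2 * v 4 + x 6 ^ 2 * v 5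
        = r * (a * b + b * c - a * c)) ∧
    (x 2 ^ 2 * v 1 + x 3 ^ 2 * v 2 + x 4 ^ 2 * v 3 + x 5 ^ 2 * v 4 + x 6 ^ 2 * v 5 = 0
        ↔ a = c ∧ c = -b) := by
  obtain ⟨h1, h2, h3, h4, h5, h6, h7, h8, h9, h10, h11, h12⟩ := h
  have e2 := hx 2
  have e3 := hx 3
  have e4 := hx 4
  have e5 := hx 5
  have e6 := hx 6
  norm_num [Finset.sum_Icc_succ_top, show (1:ℕ) ≤ 2 by norm_num, show (1:ℕ) ≤ 3 by norm_num,
    show (1:ℕ) ≤ 4 by norm_num, show (1:ℕ) ≤ 5 by norm_num] at e2 e3 e4 e5 e6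
  rw [e2, e3, e4, e5, e6, h1, h2, h3, h4, h5, h6, h7, h8, h9, h10]
  clear h1 h2 h3 h4 h5 h6 h7 h8 h9 h10 h11 h12 hx e2 e3 e4 e5 e6 u v x
  revert ha hb hc hr
  revert a b c r
  decide
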